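/- Fix κ ≥ 0. Then B(0) = E(κ)², and as q → 1 from below, B(q) converges to C_κ = ∫_ℝ max(κ - z, 0)² φ(z) dz; moreover C_κ = (κ² + 1)·Φ(κ) + κ·φ(κ). -/

import Mathlib

open MeasureTheory Real Filter

/-- The standard normal density. -/
noncomputable def gphi (u : ℝ) : ℝ := Real.exp (-u ^ 2 / 2) / Real.sqrt (2 * Real.pi)

/-- The standard normal CDF. -/
noncomputable def gPhi (u : ℝ) : ℝ := ∫ s in Set.Iic u, gphi s

/-- The standard normal tail. -/
noncomputable def gPhiBar (u : ℝ) : ℝ := 1 - gPhi u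

/-- The inverse Mills ratio. -/
noncomputable def mills (u : ℝ) : ℝ := gphi u / gPhiBar u

/-- P(r) = E[tanh²(√r Z)]. -/
noncomputable def Pfun (r : ℝ) : ℝ := ∫ z : ℝ, Real.tanh (Real.sqrt r * z) ^ 2 * gphi z

/-- B(q). -/
noncomputable def Bfun (κ q : ℝ) : ℝ :=
  (1 - q) * ∫ z : ℝ, mills ((κ - Real.sqrt q * z) / Real.sqrt (1 - q)) ^ 2 * gphi z

/-- C_κ. -/
noncomputable def Ckappa (κ : ℝ) : ℝ := ∫ z : ℝ, max (κ - z) 0 ^ 2 * gphi z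

/-- The critical capacity. -/
noncomputable def alphac (κ : ℝ) : ℝ := 2 / (Real.pi * Ckappa κ)

section Aux
open Set Topology intervalIntegral

lemma sqrt2pi_pos : 0 < Real.sqrt (2 * Real.pi) := Real.sqrt_pos.2 (by positivity)

lemma gphi_pos (u : ℝ) : 0 < gphi u := div_pos (exp_pos _) sqrt2pi_pos

lemma gphi_eq (u : ℝ) : gphi u = Real.exp (-(1/2) * u ^ 2) * (Real.sqrt (2 * Real.pi))⁻¹ := by
  rw [gphi, div_eq_mul_inv]; ring_nf

lemma continuous_gphi : Continuous gphi := by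
  unfold gphi
  fun_prop

lemma integrable_gphi : Integrable gphi := by
  have := (integrable_exp_neg_mul_sq (by norm_num : (0:ℝ) < 1/2)).mul_const
    (Real.sqrt (2 * Real.pi))⁻¹
  simpa only [← gphi_eq] using this

lemma integral_gphi : ∫ z : ℝ, gphi z = 1 := by
  have h := integral_gaussian (1/2 : ℝ)
  have h2 : Real.sqrt (π / (1/2)) = Real.sqrt (2 * π) := by norm_num [mul_comm]
  simp only [gphi_eq, MeasureTheory.integral_mul_const, h, h2]
  rw [mul_inv_cancel₀ (ne_of_gt sqrt2pi_pos)]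

lemma integrable_mul_gphi : Integrable (fun z => z * gphi z) := by
  have := (integrable_mul_exp_neg_mul_sq (by norm_num : (0:ℝ) < 1/2)).mul_const
    (Real.sqrt (2 * Real.pi))⁻¹
  simpa only [mul_assoc, ← gphi_eq] using this

lemma integrable_sq_mul_gphi : Integrable (fun z => z ^ 2 * gphi z) := by
  have h := (integrable_rpow_mul_exp_neg_mul_sq (by norm_num : (0:ℝ) < 1/2)
    (by norm_num : (-1:ℝ) < 2)).mul_const (Real.sqrt (2 * Real.pi))⁻¹
  have : (fun x : ℝ => x ^ (2:ℝ) * Real.exp (-(1/2) * x ^ 2) * (Real.sqrt (2 * Real.pi))⁻¹)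
      = fun z => z ^ 2 * gphi z := by
    funext x; rw [gphi_eq, mul_assoc, show ((2:ℝ)) = ((2:ℕ):ℝ) by norm_num, Real.rpow_natCast]
  rwa [this] at h

lemma gPhi_sub (a b : ℝ) : gPhi b - gPhi a = ∫ t in a..b, gphi t :=
  intervalIntegral.integral_Iic_sub_Iic integrable_gphi.integrableOn integrable_gphi.integrableOn

lemma hasDerivAt_gPhi (u : ℝ) : HasDerivAt gPhi (gphi u) u := by
  have h : HasDerivAt (fun x => ∫ t in (0:ℝ)..x, gphi t) (gphi u) u := by
    exact intervalIntegral.integral_hasDerivAt_right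
      (integrable_gphi.intervalIntegrable)
      (continuous_gphi.stronglyMeasurableAtFilter _ _)
      continuous_gphi.continuousAt
  have : gPhi = fun x => gPhi 0 + ∫ t in (0:ℝ)..x, gphi t := by
    funext x; rw [← gPhi_sub 0 x]; ring
  rw [this]
  simpa using (h.const_add (gPhi 0))

lemma continuous_gPhi : Continuous gPhi := by
  have : Differentiable ℝ gPhi := fun u => (hasDerivAt_gPhi u).differentiableAt
  exact this.continuous

lemma gPhiBar_eq (u : ℝ) : gPhiBar u = ∫ t in Ioi u, gphi t := by
  have := intervalIntegral.integral_Iic_add_Ioi (b := u) (f := gphi) (μ := volume)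
    integrable_gphi.integrableOn integrable_gphi.integrableOn
  rw [integral_gphi] at this
  rw [gPhiBar, gPhi, ← this]; ring

lemma gPhiBar_pos (u : ℝ) : 0 < gPhiBar u := by
  rw [gPhiBar_eq]
  rw [setIntegral_pos_iff_support_of_nonneg_ae
    (Filter.Eventually.of_forall fun t => (gphi_pos t).le)
    integrable_gphi.integrableOn]
  have : Function.support gphi ∩ Ioi u = Ioi u := by
    rw [inter_eq_right]
    intro t _
    exact (gphi_pos t).ne'
  rw [this]
  simp

lemma gPhi_pos (u : ℝ) : 0 < gPhi u := by
  rw [gPhi]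
  rw [setIntegral_pos_iff_support_of_nonneg_ae
    (Filter.Eventually.of_forall fun t => (gphi_pos t).le)
    integrable_gphi.integrableOn]
  have : Function.support gphi ∩ Iic u = Iic u := by
    rw [inter_eq_right]; intro t _; exact (gphi_pos t).ne'
  rw [this]; simp

lemma gPhi_mono : Monotone gPhi := by
  intro a b hab
  have h := gPhi_sub a b
  have : 0 ≤ ∫ t in a..b, gphi t :=
    intervalIntegral.integral_nonneg hab fun t _ => (gphi_pos t).le
  linarith

lemma gphi_neg (t : ℝ) : gphi (-t) = gphi t := by simp [gphi]

lemma gPhi_zero : gPhi 0 = 1/2 := by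
  have h1 : gPhi 0 + gPhiBar 0 = 1 := by rw [gPhiBar]; ring
  have h2 : gPhiBar 0 = gPhi 0 := by
    rw [gPhiBar_eq, gPhi, ← neg_zero, ← integral_comp_neg_Iic]
    simp only [gphi_neg, neg_zero]
  linarith

lemma gphi_le_exp (t : ℝ) : gphi t ≤ Real.exp t := by
  have h1 : Real.exp (-t^2/2) ≤ Real.exp (t + 1/2) := by
    apply Real.exp_le_exp.2; nlinarith [sq_nonneg (t+1)]
  have h2 : Real.exp (1/2) ≤ Real.sqrt (2 * π) := by
    rw [show (1/2 : ℝ) = 1/2 by norm_num, Real.exp_half]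
    apply Real.sqrt_le_sqrt
    nlinarith [Real.exp_one_lt_d9, Real.pi_gt_three]
  rw [gphi, div_le_iff₀ sqrt2pi_pos]
  calc Real.exp (-t^2/2) ≤ Real.exp (t + 1/2) := h1
    _ = Real.exp t * Real.exp (1/2) := by rw [← Real.exp_add]
    _ ≤ Real.exp t * Real.sqrt (2 * π) := by
        exact mul_le_mul_of_nonneg_left h2 (Real.exp_pos t).le

lemma gPhi_le_exp (x : ℝ) : gPhi x ≤ Real.exp x := by
  rw [gPhi, ← integral_exp_Iic x]
  apply setIntegral_mono_on integrable_gphi.integrableOn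
    (integrableOn_exp_Iic x) measurableSet_Iic
  exact fun t _ => gphi_le_exp t

lemma gPhi_tendsto_atBot : Tendsto gPhi atBot (𝓝 0) := by
  apply tendsto_of_tendsto_of_tendsto_of_le_of_le (g := fun _ => (0:ℝ))
    (h := Real.exp) tendsto_const_nhds Real.tendsto_exp_atBot
  · exact fun x => (gPhi_pos x).le
  · exact fun x => gPhi_le_exp x

lemma hasDerivAt_gphi (u : ℝ) : HasDerivAt gphi (-(u * gphi u)) u := by
  have h1 : HasDerivAt (fun t : ℝ => -t^2/2) (-u) u := by
    have := ((hasDerivAt_pow 2 u).neg).div_const 2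
    simpa using this.congr_deriv (by ring)
  have h2 := (Real.hasDerivAt_exp (-u^2/2)).comp u h1
  have h3 := h2.div_const (Real.sqrt (2 * π))
  have : Real.exp (-u ^ 2 / 2) * -u / Real.sqrt (2*π) = -(u * gphi u) := by
    rw [gphi]; ring
  rw [← this]
  exact h3

lemma gphi_le_exp_neg (t : ℝ) : gphi t ≤ Real.exp (-t) := by
  rw [← gphi_neg]; exact gphi_le_exp (-t)

lemma gphi_tendsto_atTop : Tendsto gphi atTop (𝓝 0) := by
  apply tendsto_of_tendsto_of_tendsto_of_le_of_le (g := fun _ => (0:ℝ))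
    (h := fun t => Real.exp (-t)) tendsto_const_nhds
    (Real.tendsto_exp_atBot.comp tendsto_neg_atTop_atBot)
  · exact fun x => (gphi_pos x).le
  · exact fun x => gphi_le_exp_neg x

lemma integral_Ioi_mul_gphi (u : ℝ) : ∫ t in Ioi u, t * gphi t = gphi u := by
  have h : ∫ t in Ioi u, t * gphi t = 0 - (-gphi u) := by
    apply integral_Ioi_of_hasDerivAt_of_tendsto'
      (f := fun t => -gphi t) (f' := fun t => t * gphi t)
    · intro x _
      have := (hasDerivAt_gphi x).neg
      simp only [neg_neg] at this
      exact this
    · exact integrable_mul_gphi.integrableOn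
    · simpa using gphi_tendsto_atTop.neg
  simpa using h

lemma gPhiBar_le (u : ℝ) (hu : 0 < u) : gPhiBar u ≤ gphi u / u := by
  rw [gPhiBar_eq, le_div_iff₀ hu, ← MeasureTheory.integral_mul_const]
  rw [← integral_Ioi_mul_gphi u]
  apply setIntegral_mono_on
  · exact (integrable_gphi.integrableOn).mul_const u
  · exact integrable_mul_gphi.integrableOn
  · exact measurableSet_Ioi
  · intro t ht
    have := (gphi_pos t).le
    rw [mul_comm]
    exact mul_le_mul_of_nonneg_right (le_of_lt ht) this

lemma mills_ge (u : ℝ) (hu : 0 < u) : u ≤ mills u := by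
  rw [mills, le_div_iff₀ (gPhiBar_pos u)]
  have h := gPhiBar_le u hu
  calc u * gPhiBar u ≤ u * (gphi u / u) :=
        mul_le_mul_of_nonneg_left h hu.le
    _ = gphi u := by field_simp

lemma gPhiBar_ge (u : ℝ) : u * gphi u / (u^2 + 1) ≤ gPhiBar u := by
  set f : ℝ → ℝ := fun t => -(t * gphi t / (t^2 + 1)) with hf
  set f' : ℝ → ℝ := fun t => gphi t * (1 - 2/(t^2+1)^2) with hf'
  have hderiv : ∀ x : ℝ, HasDerivAt f (f' x) x := by
    intro x
    have hx : (x:ℝ)^2 + 1 ≠ 0 := by positivity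
    have h1 : HasDerivAt (fun t : ℝ => t * gphi t) (gphi x + x * -(x * gphi x)) x := by
      have := (hasDerivAt_id' x).mul (hasDerivAt_gphi x)
      rw [one_mul] at this
      exact this
    have h2 : HasDerivAt (fun t : ℝ => t^2 + 1) (2*x) x := by
      simpa using (hasDerivAt_pow 2 x).add_const 1
    have h3 := (h1.div h2 hx).neg
    exact h3.congr_deriv (by rw [hf']; field_simp; ring)
  have htop : Tendsto f atTop (𝓝 0) := by
    apply tendsto_of_tendsto_of_tendsto_of_le_of_le' (g := fun t => -gphi t)
      (h := fun _ => (0:ℝ)) (by simpa using gphi_tendsto_atTop.neg) tendsto_const_nhds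
    · filter_upwards [eventually_ge_atTop (0:ℝ)] with t ht
      rw [hf]
      have h1 : t * gphi t / (t^2+1) ≤ gphi t := by
        rw [div_le_iff₀ (by positivity)]
        have := (gphi_pos t).le
        nlinarith [sq_nonneg t, sq_nonneg (t-1)]
      linarith
    · filter_upwards [eventually_ge_atTop (0:ℝ)] with t ht
      rw [hf]
      have : 0 ≤ t * gphi t / (t^2+1) :=
        div_nonneg (mul_nonneg ht (gphi_pos t).le) (by positivity)
      linarith
  have hint : IntegrableOn f' (Ioi u) := by
    apply (Integrable.mono' integrable_gphi _ _).integrableOn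
    · apply Continuous.aestronglyMeasurable
      apply continuous_gphi.mul
      apply Continuous.sub continuous_const
      apply Continuous.div continuous_const (by continuity)
      intro x; positivity
    · apply Filter.Eventually.of_forall
      intro t
      rw [Real.norm_eq_abs, hf', abs_mul, abs_of_nonneg (gphi_pos t).le]
      have h1 : |1 - 2/(t^2+1)^2| ≤ 1 := by
        rw [abs_le]
        constructor
        · have : 2/(t^2+1)^2 ≤ 2 := by
            rw [div_le_iff₀ (by positivity)]
            nlinarith [sq_nonneg t]
          linarith
        · have : 0 < 2/(t^2+1)^2 := by positivity
          linarith
      nlinarith [(gphi_pos t).le, abs_nonneg (1 - 2/(t^2+1)^2)]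
  have key : ∫ t in Ioi u, f' t = u * gphi u / (u^2+1) := by
    rw [integral_Ioi_of_hasDerivAt_of_tendsto' (fun x _ => hderiv x) hint htop]
    rw [hf]; ring
  rw [← key, gPhiBar_eq]
  apply setIntegral_mono_on hint integrable_gphi.integrableOn measurableSet_Ioi
  intro t _
  rw [hf']
  have h2 : 0 < 2/(t^2+1)^2 := by positivity
  nlinarith [(gphi_pos t).le]

lemma mills_nonneg (u : ℝ) : 0 ≤ mills u :=
  div_nonneg (gphi_pos u).le (gPhiBar_pos u).le

lemma mills_le_add_inv (u : ℝ) (hu : 0 < u) : mills u ≤ u + 1/u := by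
  have h := gPhiBar_ge u
  have h2 : 0 < u * gphi u / (u^2+1) := by
    have := gphi_pos u; positivity
  rw [mills]
  calc gphi u / gPhiBar u ≤ gphi u / (u * gphi u / (u^2+1)) :=
        div_le_div_of_nonneg_left (gphi_pos u).le h2 h
    _ = u + 1/u := by
        have := (gphi_pos u).ne'
        field_simp

lemma gphi_le_04 (t : ℝ) : gphi t ≤ 0.4 := by
  have h1 : Real.exp (-t^2/2) ≤ 1 := by
    rw [Real.exp_le_one_iff]
    nlinarith [sq_nonneg t]
  have h2 : (2.5:ℝ) ≤ Real.sqrt (2 * π) := by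
    have h3 : (2.5:ℝ) = Real.sqrt (2.5^2) := by
      rw [Real.sqrt_sq]; norm_num
    rw [h3]
    apply Real.sqrt_le_sqrt
    nlinarith [Real.pi_gt_d6]
  rw [gphi, div_le_iff₀ sqrt2pi_pos]
  nlinarith

lemma gPhiBar_one_ge : 0.1 ≤ gPhiBar 1 := by
  have h1 : gPhi 1 = gPhi 0 + ∫ t in (0:ℝ)..1, gphi t := by
    rw [← gPhi_sub 0 1]; ring
  have h2 : ∫ t in (0:ℝ)..1, gphi t ≤ ∫ t in (0:ℝ)..1, (0.4:ℝ) := by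
    apply intervalIntegral.integral_mono_on (by norm_num)
      (integrable_gphi.intervalIntegrable) (intervalIntegrable_const)
    exact fun t _ => gphi_le_04 t
  simp only [intervalIntegral.integral_const, smul_eq_mul] at h2
  rw [gPhiBar, h1, gPhi_zero]
  norm_num at h2 ⊢
  linarith

lemma mills_le_4 (u : ℝ) (hu0 : 0 ≤ u) (hu1 : u ≤ 1) : mills u ≤ 4 := by
  have h1 : gPhiBar 1 ≤ gPhiBar u := by
    rw [gPhiBar, gPhiBar]
    have := gPhi_mono hu1
    linarith
  have h2 : (0.1:ℝ) ≤ gPhiBar u := le_trans gPhiBar_one_ge h1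
  rw [mills, div_le_iff₀ (gPhiBar_pos u)]
  have := gphi_le_04 u
  nlinarith

lemma mills_le_one (u : ℝ) (hu : u ≤ 0) : mills u ≤ 1 := by
  have h1 : gPhiBar 0 ≤ gPhiBar u := by
    rw [gPhiBar, gPhiBar]
    have := gPhi_mono hu
    linarith
  have h2 : gPhiBar 0 = 1/2 := by rw [gPhiBar, gPhi_zero]; norm_num
  rw [mills, div_le_one (gPhiBar_pos u)]
  have := gphi_le_04 u
  linarith [h2 ▸ h1]

lemma mills_le_bound (u : ℝ) : mills u ≤ max u 0 + 4 := by
  rcases le_or_gt u 0 with h | h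
  · have := mills_le_one u h
    have : max u 0 = 0 := max_eq_right h
    linarith [mills_le_one u ‹u ≤ 0›]
  · rcases le_or_gt u 1 with h1 | h1
    · have := mills_le_4 u h.le h1
      have hm : max u 0 = u := max_eq_left h.le
      linarith
    · have := mills_le_add_inv u h
      have hinv : 1/u ≤ 1 := by
        rw [div_le_one h]; linarith
      have hm : max u 0 = u := max_eq_left h.le
      linarith

lemma continuous_mills : Continuous mills := by
  have : mills = fun u => gphi u / (1 - gPhi u) := by
    funext u; rw [mills, gPhiBar]
  rw [this]
  exact continuous_gphi.div (continuous_const.sub continuous_gPhi)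
    (fun u => (gPhiBar_pos u).ne')

lemma tendsto_mul_gphi_atTop : Tendsto (fun t => t * gphi t) atTop (𝓝 0) := by
  apply tendsto_of_tendsto_of_tendsto_of_le_of_le' (g := fun _ => (0:ℝ))
    (h := fun t => t * Real.exp (-t)) tendsto_const_nhds
  · have h := Real.tendsto_pow_mul_exp_neg_atTop_nhds_zero 1
    simpa using h
  · filter_upwards [eventually_ge_atTop (0:ℝ)] with t ht
    exact mul_nonneg ht (gphi_pos t).le
  · filter_upwards [eventually_ge_atTop (0:ℝ)] with t ht
    exact mul_le_mul_of_nonneg_left (gphi_le_exp_neg t) ht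

lemma tendsto_mul_gphi_atBot : Tendsto (fun t => t * gphi t) atBot (𝓝 0) := by
  have h : (fun t : ℝ => t * gphi t) = (fun t : ℝ => -(t * gphi t)) ∘ (fun z : ℝ => -z) := by
    funext z; simp [gphi_neg]
  rw [h]
  have := (tendsto_mul_gphi_atTop.neg).comp tendsto_neg_atBot_atTop
  simpa using this

lemma gphi_tendsto_atBot : Tendsto gphi atBot (𝓝 0) := by
  apply tendsto_of_tendsto_of_tendsto_of_le_of_le (g := fun _ => (0:ℝ))
    (h := Real.exp) tendsto_const_nhds Real.tendsto_exp_atBot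
  · exact fun x => (gphi_pos x).le
  · exact fun x => gphi_le_exp x

lemma integrable_sub_sq_gphi (κ : ℝ) : Integrable (fun z => (κ - z)^2 * gphi z) := by
  have h : (fun z => (κ - z)^2 * gphi z)
      = fun z => (κ^2 * gphi z - (2*κ) * (z * gphi z)) + z^2 * gphi z := by
    funext z; ring
  rw [h]
  exact ((integrable_gphi.const_mul _).sub (integrable_mul_gphi.const_mul _)).add
    integrable_sq_mul_gphi

lemma max_sq_le (a : ℝ) : max a 0 ^ 2 ≤ a ^ 2 := by
  rcases le_or_gt a 0 with h | h
  · rw [max_eq_right h]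
    simpa using sq_nonneg a
  · rw [max_eq_left h.le]

lemma integrable_max_sq_gphi (κ : ℝ) : Integrable (fun z => max (κ - z) 0 ^ 2 * gphi z) := by
  apply Integrable.mono' (integrable_sub_sq_gphi κ)
  · apply Continuous.aestronglyMeasurable
    exact ((continuous_const.sub continuous_id).max continuous_const).pow 2 |>.mul continuous_gphi
  · apply Filter.Eventually.of_forall
    intro z
    rw [Real.norm_eq_abs, abs_mul, abs_of_nonneg (gphi_pos z).le,
      abs_of_nonneg (by positivity : (0:ℝ) ≤ max (κ - z) 0 ^ 2)]
    exact mul_le_mul_of_nonneg_right (max_sq_le _) (gphi_pos z).le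

lemma Ckappa_eq_Iic (κ : ℝ) :
    (∫ z : ℝ, max (κ - z) 0 ^ 2 * gphi z) = ∫ z in Iic κ, (κ - z)^2 * gphi z := by
  rw [← intervalIntegral.integral_Iic_add_Ioi (b := κ)
    ((integrable_max_sq_gphi κ).integrableOn) ((integrable_max_sq_gphi κ).integrableOn)]
  have h1 : ∫ z in Ioi κ, max (κ - z) 0 ^ 2 * gphi z = 0 := by
    rw [setIntegral_congr_fun measurableSet_Ioi
      (g := fun _ => (0:ℝ)) (fun z hz => by
        have hz' : κ < z := hz
        show max (κ - z) 0 ^ 2 * gphi z = 0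
        rw [max_eq_right (by linarith)]
        ring)]
    simp
  have h2 : ∫ z in Iic κ, max (κ - z) 0 ^ 2 * gphi z = ∫ z in Iic κ, (κ - z)^2 * gphi z := by
    apply setIntegral_congr_fun measurableSet_Iic
    intro z hz
    have hz' : z ≤ κ := hz
    show max (κ - z) 0 ^ 2 * gphi z = (κ - z) ^ 2 * gphi z
    rw [max_eq_left (by linarith)]
  rw [h1, h2, add_zero]

lemma integral_Iic_sub_sq_gphi (κ : ℝ) :
    ∫ z in Iic κ, (κ - z)^2 * gphi z = (κ^2 + 1) * gPhi κ + κ * gphi κ := by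
  set G : ℝ → ℝ := fun z => (κ^2+1) * gPhi z + (2*κ - z) * gphi z with hG
  have hderiv : ∀ z : ℝ, HasDerivAt G ((κ - z)^2 * gphi z) z := by
    intro z
    have h1 := (hasDerivAt_gPhi z).const_mul (κ^2+1)
    have h2 : HasDerivAt (fun t : ℝ => 2*κ - t) (-1) z := by
      exact (hasDerivAt_id' z).const_sub (2*κ)
    have h3 := h2.mul (hasDerivAt_gphi z)
    have h4 := h1.add h3
    exact h4.congr_deriv (by ring)
  have htop : Tendsto G atBot (𝓝 0) := by
    have h1 : Tendsto (fun z => (κ^2+1) * gPhi z) atBot (𝓝 ((κ^2+1) * 0)) :=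
      gPhi_tendsto_atBot.const_mul _
    have h2 : Tendsto (fun z : ℝ => (2*κ - z) * gphi z) atBot (𝓝 (2*κ * 0 - 0)) := by
      have := (gphi_tendsto_atBot.const_mul (2*κ)).sub tendsto_mul_gphi_atBot
      convert this using 2 with z
      ring
    have := h1.add h2
    simpa using this
  have := integral_Iic_of_hasDerivAt_of_tendsto' (a := κ)
    (fun x _ => hderiv x) (integrable_sub_sq_gphi κ).integrableOn htop
  rw [this, hG]
  ring

lemma Ckappa_formula (κ : ℝ) :
    (∫ z : ℝ, max (κ - z) 0 ^ 2 * gphi z) = (κ^2 + 1) * gPhi κ + κ * gphi κ := by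
  rw [Ckappa_eq_Iic, integral_Iic_sub_sq_gphi]

lemma tendsto_s : Tendsto (fun q : ℝ => Real.sqrt (1-q)) (𝓝[<] (1:ℝ)) (𝓝 0) := by
  have h : Tendsto (fun q : ℝ => Real.sqrt (1-q)) (𝓝 1) (𝓝 (Real.sqrt (1-1))) :=
    (Real.continuous_sqrt.comp (continuous_const.sub continuous_id)).tendsto 1
  simpa using h.mono_left nhdsWithin_le_nhds

lemma tendsto_a (κ z : ℝ) :
    Tendsto (fun q : ℝ => κ - Real.sqrt q * z) (𝓝[<] (1:ℝ)) (𝓝 (κ - z)) := by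
  have h : Tendsto (fun q : ℝ => κ - Real.sqrt q * z) (𝓝 1) (𝓝 (κ - Real.sqrt 1 * z)) :=
    (continuous_const.sub ((Real.continuous_sqrt.mul continuous_const))).tendsto 1
  simpa using h.mono_left nhdsWithin_le_nhds

lemma ev_s_pos : ∀ᶠ q in (𝓝[<] (1:ℝ)), 0 < Real.sqrt (1-q) := by
  filter_upwards [self_mem_nhdsWithin] with q hq
  have : q < 1 := hq
  exact Real.sqrt_pos.2 (by linarith)

lemma tendsto_sqrt_mills (κ z : ℝ) (hz : κ - z ≠ 0) :
    Tendsto (fun q => Real.sqrt (1-q) * mills ((κ - Real.sqrt q * z) / Real.sqrt (1-q)))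
      (𝓝[<] (1:ℝ)) (𝓝 (max (κ - z) 0)) := by
  set x := κ - z with hx
  rcases lt_or_gt_of_ne hz with hneg | hpos
  · -- x < 0
    rw [max_eq_right hneg.le]
    apply tendsto_of_tendsto_of_tendsto_of_le_of_le' (g := fun _ => (0:ℝ))
      (h := fun q => Real.sqrt (1-q)) tendsto_const_nhds tendsto_s
    · filter_upwards [ev_s_pos] with q hs
      exact mul_nonneg hs.le (mills_nonneg _)
    · filter_upwards [ev_s_pos,
        (tendsto_a κ z).eventually (eventually_lt_nhds (by linarith : x < x/2))] with q hs ha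
      have hu : (κ - Real.sqrt q * z) / Real.sqrt (1-q) ≤ 0 :=
        div_nonpos_of_nonpos_of_nonneg (by linarith) hs.le
      calc Real.sqrt (1-q) * mills ((κ - Real.sqrt q * z) / Real.sqrt (1-q))
          ≤ Real.sqrt (1-q) * 1 := mul_le_mul_of_nonneg_left (mills_le_one _ hu) hs.le
        _ = Real.sqrt (1-q) := mul_one _
  · -- x > 0
    rw [max_eq_left hpos.le]
    have hup : Tendsto (fun q => (κ - Real.sqrt q * z) +
        (Real.sqrt (1-q) * Real.sqrt (1-q)) / (κ - Real.sqrt q * z)) (𝓝[<] (1:ℝ))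
        (𝓝 (x + 0 * 0 / x)) :=
      (tendsto_a κ z).add ((tendsto_s.mul tendsto_s).div (tendsto_a κ z) hz)
    apply tendsto_of_tendsto_of_tendsto_of_le_of_le' (g := fun q => κ - Real.sqrt q * z)
      (h := fun q => (κ - Real.sqrt q * z) +
        (Real.sqrt (1-q) * Real.sqrt (1-q)) / (κ - Real.sqrt q * z))
      (tendsto_a κ z) (by simpa using hup)
    · filter_upwards [ev_s_pos,
        (tendsto_a κ z).eventually (eventually_gt_nhds (half_lt_self hpos))] with q hs ha
      have hu : 0 < (κ - Real.sqrt q * z) / Real.sqrt (1-q) :=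
        div_pos (by linarith) hs
      calc κ - Real.sqrt q * z
          = Real.sqrt (1-q) * ((κ - Real.sqrt q * z) / Real.sqrt (1-q)) := by
            field_simp
        _ ≤ Real.sqrt (1-q) * mills ((κ - Real.sqrt q * z) / Real.sqrt (1-q)) :=
            mul_le_mul_of_nonneg_left (mills_ge _ hu) hs.le
    · filter_upwards [ev_s_pos,
        (tendsto_a κ z).eventually (eventually_gt_nhds (half_lt_self hpos))] with q hs ha
      have hapos : 0 < κ - Real.sqrt q * z := by linarith
      have hu : 0 < (κ - Real.sqrt q * z) / Real.sqrt (1-q) := div_pos hapos hs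
      calc Real.sqrt (1-q) * mills ((κ - Real.sqrt q * z) / Real.sqrt (1-q))
          ≤ Real.sqrt (1-q) * ((κ - Real.sqrt q * z) / Real.sqrt (1-q)
              + 1 / ((κ - Real.sqrt q * z) / Real.sqrt (1-q))) :=
            mul_le_mul_of_nonneg_left (mills_le_add_inv _ hu) hs.le
        _ = (κ - Real.sqrt q * z) +
            (Real.sqrt (1-q) * Real.sqrt (1-q)) / (κ - Real.sqrt q * z) := by
            field_simp

lemma bound_integrable (κ : ℝ) :
    Integrable (fun z : ℝ => (|κ| + |z| + 4)^2 * gphi z) := by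
  apply Integrable.mono'
    (g := fun z => (2*(|κ|+4)^2) * gphi z + 2 * (z^2 * gphi z))
    ((integrable_gphi.const_mul _).add (integrable_sq_mul_gphi.const_mul 2))
  · apply Continuous.aestronglyMeasurable
    exact (((continuous_const.add continuous_abs).add continuous_const).pow 2).mul
      continuous_gphi
  · apply Filter.Eventually.of_forall
    intro z
    rw [Real.norm_eq_abs,
      abs_of_nonneg (mul_nonneg (by positivity) (gphi_pos z).le)]
    have h1 : (|κ| + |z| + 4)^2 ≤ 2*(|κ|+4)^2 + 2*z^2 := by
      nlinarith [sq_nonneg (|κ| + 4 - |z|), sq_abs z, abs_nonneg κ, abs_nonneg z]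
    nlinarith [(gphi_pos z).le, sq_abs z]

lemma sqrt_mills_le (κ z q : ℝ) (hq0 : 0 < q) (hq1 : q < 1) :
    Real.sqrt (1-q) * mills ((κ - Real.sqrt q * z) / Real.sqrt (1-q))
      ≤ |κ| + |z| + 4 := by
  set s := Real.sqrt (1-q) with hs
  have hspos : 0 < s := Real.sqrt_pos.2 (by linarith)
  have hsle : s ≤ 1 := Real.sqrt_le_one.2 (by linarith)
  have hqle : Real.sqrt q ≤ 1 := Real.sqrt_le_one.2 (by linarith)
  set u := (κ - Real.sqrt q * z) / s with hu
  calc s * mills u ≤ s * (max u 0 + 4) :=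
        mul_le_mul_of_nonneg_left (mills_le_bound u) hspos.le
    _ = max (s * u) (s * 0) + 4 * s := by
        rw [mul_add, mul_max_of_nonneg _ _ hspos.le]; ring
    _ = max (κ - Real.sqrt q * z) 0 + 4 * s := by
        rw [hu, mul_div_cancel₀ _ hspos.ne', mul_zero]
    _ ≤ |κ - Real.sqrt q * z| + 4 * s := by
        gcongr
        exact max_le (le_abs_self _) (abs_nonneg _)
    _ ≤ (|κ| + |z|) + 4 * 1 := by
        gcongr
        calc |κ - Real.sqrt q * z| ≤ |κ| + |Real.sqrt q * z| := abs_sub _ _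
          _ ≤ |κ| + |z| := by
              rw [abs_mul, abs_of_nonneg (Real.sqrt_nonneg q)]
              have : Real.sqrt q * |z| ≤ 1 * |z| :=
                mul_le_mul_of_nonneg_right hqle (abs_nonneg z)
              linarith
    _ = |κ| + |z| + 4 := by ring

lemma tendsto_Bfun_integrand (κ z : ℝ) (hz : z ≠ κ) :
    Tendsto (fun q => (1-q) * (mills ((κ - Real.sqrt q * z) / Real.sqrt (1-q))^2 * gphi z))
      (𝓝[<] (1:ℝ)) (𝓝 (max (κ - z) 0 ^ 2 * gphi z)) := by
  have h1 := ((tendsto_sqrt_mills κ z (sub_ne_zero.2 (Ne.symm hz))).pow 2).mul_const (gphi z)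
  apply h1.congr'
  filter_upwards [self_mem_nhdsWithin] with q hq
  have hq1 : q < 1 := hq
  rw [mul_pow, Real.sq_sqrt (by linarith : (0:ℝ) ≤ 1 - q)]
  ring

lemma tendsto_Bfun (κ : ℝ) :
    Tendsto (Bfun κ) (𝓝[<] (1:ℝ))
      (𝓝 (∫ z : ℝ, max (κ - z) 0 ^ 2 * gphi z)) := by
  have heq : ∀ q, Bfun κ q =
      ∫ z : ℝ, (1-q) * (mills ((κ - Real.sqrt q * z) / Real.sqrt (1-q))^2 * gphi z) := by
    intro q
    rw [Bfun, ← MeasureTheory.integral_const_mul]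
  have h := tendsto_integral_filter_of_dominated_convergence
    (F := fun q z => (1-q) * (mills ((κ - Real.sqrt q * z) / Real.sqrt (1-q))^2 * gphi z))
    (f := fun z => max (κ - z) 0 ^ 2 * gphi z)
    (bound := fun z : ℝ => (|κ| + |z| + 4)^2 * gphi z)
    (l := 𝓝[<] (1:ℝ)) ?_ ?_ (bound_integrable κ) ?_
  · exact Tendsto.congr (fun q => (heq q).symm) h
  · apply Filter.Eventually.of_forall
    intro q
    apply Continuous.aestronglyMeasurable
    apply Continuous.mul continuous_const
    apply Continuous.mul _ continuous_gphi
    apply Continuous.pow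
    exact continuous_mills.comp
      ((continuous_const.sub (continuous_const.mul continuous_id)).div_const _)
  · filter_upwards [self_mem_nhdsWithin,
      (eventually_gt_nhds zero_lt_one).filter_mono nhdsWithin_le_nhds] with q hq1 hq0
    apply Filter.Eventually.of_forall
    intro z
    have hq1' : q < 1 := hq1
    have key := sqrt_mills_le κ z q hq0 hq1'
    have hmn := mills_nonneg ((κ - Real.sqrt q * z) / Real.sqrt (1-q))
    have hs : Real.sqrt (1-q) * Real.sqrt (1-q) = 1 - q :=
      Real.mul_self_sqrt (by linarith)
    rw [Real.norm_eq_abs, abs_of_nonneg (mul_nonneg (by linarith) (mul_nonneg (sq_nonneg _) (gphi_pos z).le))]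
    have h2 : (1-q) * mills ((κ - Real.sqrt q * z) / Real.sqrt (1-q))^2
        = (Real.sqrt (1-q) * mills ((κ - Real.sqrt q * z) / Real.sqrt (1-q)))^2 := by
      rw [mul_pow, Real.sq_sqrt (by linarith : (0:ℝ) ≤ 1 - q)]
    have h3 : (Real.sqrt (1-q) * mills ((κ - Real.sqrt q * z) / Real.sqrt (1-q)))^2
        ≤ (|κ| + |z| + 4)^2 := by
      apply pow_le_pow_left₀ (mul_nonneg (Real.sqrt_nonneg _) hmn) key
    calc (1-q) * (mills ((κ - Real.sqrt q * z) / Real.sqrt (1-q))^2 * gphi z)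
        = ((1-q) * mills ((κ - Real.sqrt q * z) / Real.sqrt (1-q))^2) * gphi z := by ring
      _ ≤ (|κ| + |z| + 4)^2 * gphi z := by
          rw [h2]
          exact mul_le_mul_of_nonneg_right h3 (gphi_pos z).le
  · have h0 : ∀ᵐ z : ℝ, z ≠ κ := by
      rw [ae_iff]
      simp only [ne_eq, not_not, Set.setOf_eq_eq_singleton]
      exact measure_singleton κ
    filter_upwards [h0] with z hzκ
    exact tendsto_Bfun_integrand κ z hzκ

end Aux

theorem stmt_8 (κ : ℝ) (hκ : 0 ≤ κ) :
    Bfun κ 0 = mills κ ^ 2 ∧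
    Filter.Tendsto (Bfun κ) (nhdsWithin 1 (Set.Iio 1)) (nhds (Ckappa κ)) ∧
    Ckappa κ = (κ ^ 2 + 1) * gPhi κ + κ * gphi κ := by
  refine ⟨?_, ?_, ?_⟩
  · have h : Bfun κ 0 = ∫ z : ℝ, mills κ ^ 2 * gphi z := by
      rw [Bfun]; norm_num
    rw [h, MeasureTheory.integral_const_mul, integral_gphi, mul_one]
  · exact tendsto_Bfun κ
  · exact Ckappa_formula κ
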